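/- Suppose M : ℝ → ℝ and a, C₁, C₂ ∈ ℝ with a ≠ 0, and suppose that for all R in a nonempty open interval I ⊆ (0,∞) and all ϑ ∈ ℝ one has M'(R) = 4π·(Σ²/R²)·F₁(R)·F₂(ϑ), where Σ = R² + a²cos²ϑ, F₁(R) = −2/(C₁R² + C₂), F₂(ϑ) = −2C₃/(a²C₁cos(2ϑ) + a²C₁ − 4C₂), with denominators nonvanishing on I × ℝ and C₃ ≠ 0. Then F₁ vanishes identically on I, i.e., there is no such nonzero separated solution. -/

import Mathlib

theorem stmt13 (M : ℝ → ℝ) (a C₁ C₂ C₃ : ℝ) (ha : a ≠ 0) (hC₃ : C₃ ≠ 0)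
    (I : Set ℝ) (hIopen : IsOpen I) (hne : I.Nonempty) (hIpos : I ⊆ Set.Ioi (0:ℝ))
    (F₁ F₂ : ℝ → ℝ)
    (hF₁ : ∀ R, F₁ R = -2 / (C₁ * R^2 + C₂))
    (hF₂ : ∀ ϑ, F₂ ϑ = -2 * C₃ / (a^2 * C₁ * Real.cos (2*ϑ) + a^2 * C₁ - 4 * C₂))
    (hden1 : ∀ R ∈ I, C₁ * R^2 + C₂ ≠ 0)
    (hden2 : ∀ ϑ : ℝ, a^2 * C₁ * Real.cos (2*ϑ) + a^2 * C₁ - 4 * C₂ ≠ 0)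
    (h : ∀ R ∈ I, ∀ ϑ : ℝ, deriv M R =
      4 * Real.pi * ((R^2 + a^2 * (Real.cos ϑ)^2)^2 / R^2) * F₁ R * F₂ ϑ) :
    ∀ R ∈ I, F₁ R = 0 := by
  intro R hR
  have hR0 : R ≠ 0 := ne_of_gt (hIpos hR)
  have hπ : Real.pi ≠ 0 := Real.pi_ne_zero
  have e0 := h R hR 0
  have e4 := h R hR (Real.pi/4)
  have e2 := h R hR (Real.pi/2)
  have d0 := hden2 0
  have d4 := hden2 (Real.pi/4)
  have d2 := hden2 (Real.pi/2)
  rw [hF₂] at e0 e4 e2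
  have c4 : 2 * (Real.pi/4) = Real.pi/2 := by ring
  have c2 : 2 * (Real.pi/2) = Real.pi := by ring
  rw [c4] at e4 d4
  rw [c2] at e2 d2
  have csq : (Real.cos (Real.pi/4))^2 = 1/2 := by
    rw [Real.cos_pi_div_four, div_pow, Real.sq_sqrt (by norm_num : (2:ℝ) ≥ 0)]
    norm_num
  rw [csq] at e4
  simp only [mul_zero, Real.cos_zero, Real.cos_pi_div_two, Real.cos_pi,
    mul_one, mul_neg_one, zero_add, one_pow] at e0 e4 e2 d0 d4 d2
  have d2' : (-4:ℝ) * C₂ ≠ 0 := by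
    intro hc; apply d2; linarith [hc]
  have hC₂ : C₂ ≠ 0 := by intro hc; apply d2'; rw [hc]; ring
  have d0' : 2*a^2*C₁ - 4*C₂ ≠ 0 := by intro hc; apply d0; linarith
  have d4' : a^2*C₁ - 4*C₂ ≠ 0 := by intro hc; apply d4; linarith
  have E0 : deriv M R * (R^2 * (2*a^2*C₁ - 4*C₂)) =
      -8*Real.pi*C₃*(R^2+a^2)^2*F₁ R := by
    rw [e0, show a^2*C₁ + a^2*C₁ - 4*C₂ = 2*a^2*C₁ - 4*C₂ from by ring, div_eq_mul_inv, div_eq_mul_inv]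
    have h1 := mul_inv_cancel₀ (pow_ne_zero 2 hR0)
    have h2 := mul_inv_cancel₀ d0'
    linear_combination (-8*Real.pi*C₃*(R^2+a^2)^2*F₁ R) * (R^2 * (R^2)⁻¹) * h2 + (-8*Real.pi*C₃*(R^2+a^2)^2*F₁ R) * h1
  have E4 : deriv M R * (R^2 * (a^2*C₁ - 4*C₂)) =
      -8*Real.pi*C₃*(R^2+a^2*(1/2))^2*F₁ R := by
    rw [e4]; field_simp; ring
  rw [show -(a^2*C₁)+a^2*C₁-4*C₂ = -4*C₂ from by ring] at e2
  have E2 : deriv M R * (R^2 * (-4*C₂)) =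
      -8*Real.pi*C₃*(R^2)^2*F₁ R := by
    rw [e2]; field_simp; ring
  have key : Real.pi * C₃ * a^4 * F₁ R = 0 := by
    linear_combination ((1:ℝ)/4) * (E0 + E2 - 2*E4)
  have ha4 : a^4 ≠ 0 := pow_ne_zero _ ha
  exact (mul_eq_zero.mp key).resolve_left
    (mul_ne_zero (mul_ne_zero hπ hC₃) ha4)
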